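/- Let f : [a,b] → ℝ be a positive convex integrable function with 0 ≤ a < b and α > 0. Then f((a+b)/2) ≤ (Γ(α+1)/(2(b−a)^α)) [J_{a+}^α f(b) + J_{b−}^α f(a)] ≤ (f(a)+f(b))/2. -/

import Mathlib

open MeasureTheory intervalIntegral

/-- Riemann-Liouville left fractional integral `J_{a+}^α f(x)`. -/
noncomputable def JL (α a x : ℝ) (f : ℝ → ℝ) : ℝ :=
  (1 / Real.Gamma α) * ∫ t in a..x, (x - t) ^ (α - 1) * f t

/-- Riemann-Liouville right fractional integral `J_{b-}^α f(x)`. -/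
noncomputable def JR (α x b : ℝ) (f : ℝ → ℝ) : ℝ :=
  (1 / Real.Gamma α) * ∫ t in x..b, (t - x) ^ (α - 1) * f t

/-- `A` is invex with respect to `η`. -/
def InvexSet (A : Set ℝ) (η : ℝ → ℝ → ℝ) : Prop :=
  ∀ x ∈ A, ∀ y ∈ A, ∀ t ∈ Set.Icc (0:ℝ) 1, x + t * η y x ∈ A

/-- `f` is preinvex with respect to `η` on `A`. -/
def PreinvexOn (A : Set ℝ) (η : ℝ → ℝ → ℝ) (f : ℝ → ℝ) : Prop :=
  ∀ x ∈ A, ∀ y ∈ A, ∀ t ∈ Set.Icc (0:ℝ) 1,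
    f (x + t * η y x) ≤ (1 - t) * f x + t * f y

/-- Condition C of Mohan and Neogy. -/
def CondC (A : Set ℝ) (η : ℝ → ℝ → ℝ) : Prop :=
  ∀ x ∈ A, ∀ y ∈ A, ∀ t ∈ Set.Icc (0:ℝ) 1,
    η y (y + t * η x y) = -t * η x y ∧ η x (y + t * η x y) = (1 - t) * η x y

theorem hermite_hadamard_convex_fractional (a b : ℝ) (f : ℝ → ℝ) (α : ℝ)
    (ha : 0 ≤ a) (hab : a < b)
    (hpos : ∀ x ∈ Set.Icc a b, 0 < f x)
    (hconv : ConvexOn ℝ (Set.Icc a b) f)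
    (hint : IntervalIntegrable f volume a b)
    (hα : 0 < α) :
    f ((a + b) / 2) ≤
        Real.Gamma (α + 1) / (2 * (b - a) ^ α) * (JL α a b f + JR α a b f) ∧
      Real.Gamma (α + 1) / (2 * (b - a) ^ α) * (JL α a b f + JR α a b f) ≤
        (f a + f b) / 2 := by
  have hba : (0:ℝ) < b - a := by linarith
  have hΓ : 0 < Real.Gamma α := Real.Gamma_pos_of_pos hα
  have hΓne : Real.Gamma α ≠ 0 := hΓ.ne'
  have hbapow : 0 < (b - a) ^ α := Real.rpow_pos_of_pos hba α
  have hmema : a ∈ Set.Icc a b := Set.left_mem_Icc.2 hab.le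
  have hmemb : b ∈ Set.Icc a b := Set.right_mem_Icc.2 hab.le
  have hmemrefl : ∀ x ∈ Set.Icc a b, a + b - x ∈ Set.Icc a b := by
    intro x hx
    exact ⟨by linarith [hx.2], by linarith [hx.1]⟩
  -- chord inequality
  have hchord : ∀ x ∈ Set.Icc a b,
      f x ≤ (b - x) / (b - a) * f a + (x - a) / (b - a) * f b := by
    intro x hx
    have p1 : (0:ℝ) ≤ (b - x) / (b - a) := div_nonneg (by linarith [hx.2]) hba.le
    have p2 : (0:ℝ) ≤ (x - a) / (b - a) := div_nonneg (by linarith [hx.1]) hba.le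
    have p3 : (b - x) / (b - a) + (x - a) / (b - a) = 1 := by field_simp; ring
    have h := hconv.2 hmema hmemb p1 p2 p3
    simp only [smul_eq_mul] at h
    have hx' : (b - x) / (b - a) * a + (x - a) / (b - a) * b = x := by
      field_simp
      ring
    rwa [hx'] at h
  -- sum bound from convexity
  have hsum_bound : ∀ x ∈ Set.Icc a b, f x + f (a + b - x) ≤ f a + f b := by
    intro x hx
    have h1 := hchord x hx
    have h2 := hchord (a + b - x) (hmemrefl x hx)
    have e1 : b - (a + b - x) = x - a := by ring
    have e2 : a + b - x - a = b - x := by ring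
    rw [e1, e2] at h2
    have : (b - x) / (b - a) + (x - a) / (b - a) = 1 := by field_simp; ring
    nlinarith [hpos a hmema, hpos b hmemb]
  -- midpoint inequality
  have hmid : ∀ x ∈ Set.Icc a b, 2 * f ((a + b) / 2) ≤ f x + f (a + b - x) := by
    intro x hx
    have h := hconv.2 hx (hmemrefl x hx) (by norm_num : (0:ℝ) ≤ 1/2)
      (by norm_num : (0:ℝ) ≤ 1/2) (by norm_num)
    simp only [smul_eq_mul] at h
    have hx' : (1/2 : ℝ) * x + (1/2 : ℝ) * (a + b - x) = (a + b) / 2 := by ring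
    rw [hx'] at h
    linarith
  -- bound on f
  have hfb : ∀ x ∈ Set.Icc a b, ‖f x‖ ≤ |f a| + |f b| := by
    intro x hx
    have h := hchord x hx
    have h0 := hpos x hx
    rw [Real.norm_eq_abs, abs_of_pos h0]
    have w1 : (b - x) / (b - a) ≤ 1 := by
      rw [div_le_one hba]; linarith [hx.1]
    have w2 : (x - a) / (b - a) ≤ 1 := by
      rw [div_le_one hba]; linarith [hx.2]
    have w1' : 0 ≤ (b - x) / (b - a) := div_nonneg (by linarith [hx.2]) hba.le
    have w2' : 0 ≤ (x - a) / (b - a) := div_nonneg (by linarith [hx.1]) hba.le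
    have := hpos a hmema
    have := hpos b hmemb
    nlinarith [abs_nonneg (f a), abs_nonneg (f b), le_abs_self (f a), le_abs_self (f b)]
  -- integrability of weights
  have hw_int : IntervalIntegrable (fun t => (t - a) ^ (α - 1)) volume a b := by
    have h := (intervalIntegrable_rpow' (a := 0) (b := b - a)
      (r := α - 1) (by linarith)).comp_sub_right a
    simpa using h
  have hw'_int : IntervalIntegrable (fun t => (b - t) ^ (α - 1)) volume a b := by
    have h := (intervalIntegrable_rpow' (a := 0) (b := b - a)
      (r := α - 1) (by linarith)).comp_sub_left b
    simpa using h.symm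
  -- integrability of weight * f
  have hmul : ∀ w : ℝ → ℝ, IntervalIntegrable w volume a b →
      IntervalIntegrable (fun t => w t * f t) volume a b := by
    intro w hw
    rw [intervalIntegrable_iff_integrableOn_Ioc_of_le hab.le] at hw ⊢
    have hb : ∀ᵐ x ∂(volume.restrict (Set.Ioc a b)), ‖f x‖ ≤ |f a| + |f b| := by
      refine ae_restrict_of_forall_mem measurableSet_Ioc ?_
      intro x hx
      exact hfb x ⟨hx.1.le, hx.2⟩
    have h2 := Integrable.bdd_mul (c := |f a| + |f b|) hw hint.1.aestronglyMeasurable hb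
    have e : (fun x => f x * w x) = fun x => w x * f x := funext fun x => mul_comm _ _
    rwa [e] at h2
  have hgf1 : IntervalIntegrable (fun t => (t - a) ^ (α - 1) * f t) volume a b :=
    hmul _ hw_int
  have hgf2 : IntervalIntegrable (fun t => (b - t) ^ (α - 1) * f t) volume a b :=
    hmul _ hw'_int
  -- reflected integrand
  have hreflint : IntervalIntegrable (fun t => (t - a) ^ (α - 1) * f (a + b - t)) volume a b := by
    have h := (hgf2.comp_sub_left (a + b)).symm
    rw [show a + b - b = a by ring, show a + b - a = b by ring] at h
    have e : (fun x => (b - (a + b - x)) ^ (α - 1) * f (a + b - x))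
        = fun x => (x - a) ^ (α - 1) * f (a + b - x) := by
      funext x
      rw [show b - (a + b - x) = x - a by ring]
    rwa [e] at h
  -- reflection identity
  have hrefl : (∫ t in a..b, (b - t) ^ (α - 1) * f t)
      = ∫ t in a..b, (t - a) ^ (α - 1) * f (a + b - t) := by
    have h := intervalIntegral.integral_comp_sub_left (a := a) (b := b)
      (fun x => (x - a) ^ (α - 1) * f (a + b - x)) (a + b)
    rw [show a + b - b = a by ring, show a + b - a = b by ring] at h
    rw [← h]
    apply intervalIntegral.integral_congr
    intro x _
    simp only
    rw [show a + b - x - a = b - x by ring, show a + b - (a + b - x) = x by ring]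
  -- weight integral
  have hI : (∫ t in a..b, (t - a) ^ (α - 1)) = (b - a) ^ α / α := by
    have h := intervalIntegral.integral_comp_sub_right (a := a) (b := b)
      (fun x => x ^ (α - 1)) a
    rw [h, sub_self, integral_rpow (Or.inl (by linarith)),
      Real.zero_rpow (by linarith : α - 1 + 1 ≠ 0), sub_add_cancel]
    ring
  -- the combined integral
  set I := ∫ t in a..b, (t - a) ^ (α - 1) * (f t + f (a + b - t)) with hIdef
  have hIsplit : I = (∫ t in a..b, (t - a) ^ (α - 1) * f t)
      + ∫ t in a..b, (t - a) ^ (α - 1) * f (a + b - t) := by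
    rw [hIdef, ← intervalIntegral.integral_add hgf1 hreflint]
    apply intervalIntegral.integral_congr
    intro x _
    simp only
    ring
  have hSint : IntervalIntegrable
      (fun t => (t - a) ^ (α - 1) * (f t + f (a + b - t))) volume a b := by
    have h := hgf1.add hreflint
    have e : (fun t => (t - a) ^ (α - 1) * f t + (t - a) ^ (α - 1) * f (a + b - t))
        = fun t => (t - a) ^ (α - 1) * (f t + f (a + b - t)) := by
      funext x; ring
    rwa [e] at h
  have hwnn : ∀ x ∈ Set.Icc a b, (0:ℝ) ≤ (x - a) ^ (α - 1) := fun x hx =>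
    Real.rpow_nonneg (by linarith [hx.1]) _
  -- lower estimate on I
  have hlow : 2 * f ((a + b) / 2) * ((b - a) ^ α / α) ≤ I := by
    have hco : IntervalIntegrable (fun t => (t - a) ^ (α - 1) * (2 * f ((a + b) / 2)))
        volume a b := hw_int.mul_const _
    have h := intervalIntegral.integral_mono_on hab.le hco hSint (fun x hx => by
      exact mul_le_mul_of_nonneg_left (hmid x hx) (hwnn x hx))
    rw [intervalIntegral.integral_mul_const, hI] at h
    linarith
  -- upper estimate on I
  have hhigh : I ≤ (f a + f b) * ((b - a) ^ α / α) := by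
    have hco : IntervalIntegrable (fun t => (t - a) ^ (α - 1) * (f a + f b))
        volume a b := hw_int.mul_const _
    have h := intervalIntegral.integral_mono_on hab.le hSint hco (fun x hx => by
      exact mul_le_mul_of_nonneg_left (hsum_bound x hx) (hwnn x hx))
    rw [intervalIntegral.integral_mul_const, hI] at h
    linarith
  -- express the middle term
  have hM : Real.Gamma (α + 1) / (2 * (b - a) ^ α) * (JL α a b f + JR α a b f)
      = α / (2 * (b - a) ^ α) * I := by
    rw [JL, JR, hrefl, Real.Gamma_add_one hα.ne', hIsplit]
    field_simp
    ring
  constructor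
  · rw [hM]
    rw [show α / (2 * (b - a) ^ α) * I = α * I / (2 * (b - a) ^ α) by ring,
      le_div_iff₀ (by positivity)]
    have hα' : 0 < α := hα
    calc f ((a + b) / 2) * (2 * (b - a) ^ α)
        = α * (2 * f ((a + b) / 2) * ((b - a) ^ α / α)) := by field_simp
      _ ≤ α * I := by exact mul_le_mul_of_nonneg_left hlow hα.le
  · rw [hM]
    rw [show α / (2 * (b - a) ^ α) * I = α * I / (2 * (b - a) ^ α) by ring,
      div_le_iff₀ (by positivity)]
    calc α * I ≤ α * ((f a + f b) * ((b - a) ^ α / α)) :=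
        mul_le_mul_of_nonneg_left hhigh hα.le
      _ = (f a + f b) / 2 * (2 * (b - a) ^ α) := by field_simp
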